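/- Let f : ℝ^n → ℝ be bounded below and Lipschitz continuous with some constant L' > 0, let σ : [0,∞) → [0,∞) be a forcing function, and let M ∈ ℕ. Let {w^k} ⊂ ℝ^n and {R^k} ⊂ ℝ be sequences such that for every k: f(w^k) ≤ R^k ≤ max_{0 ≤ j ≤ min(k,M)} f(w^{k−j}) and f(w^{k+1}) ≤ R^k − σ(‖w^{k+1} − w^k‖). Then lim_{k→∞} ‖w^{k+1} − w^k‖ = 0. -/

import Mathlib

open Filter Finset

/-- `refMax g M k = max_{0 ≤ j ≤ min(k,M)} g (k - j)`, the nonmonotone reference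
maximum over the last `min(k,M)+1` values. -/
noncomputable def refMax (g : ℕ → ℝ) (M k : ℕ) : ℝ :=
  (Finset.range (min k M + 1)).sup' Finset.nonempty_range_add_one fun j => g (k - j)

private lemma le_refMax_of (g : ℕ → ℝ) (M k j : ℕ) (h : j ≤ min k M) :
    g (k - j) ≤ refMax g M k :=
  Finset.le_sup' (fun j => g (k - j)) (Finset.mem_range.2 (by omega))

private lemma le_refMax (g : ℕ → ℝ) (M k : ℕ) : g k ≤ refMax g M k := by
  simpa using le_refMax_of g M k 0 (by omega)

private lemma refMax_exists (g : ℕ → ℝ) (M k : ℕ) :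
    ∃ j, j ≤ min k M ∧ refMax g M k = g (k - j) := by
  obtain ⟨j, hj, hje⟩ :=
    Finset.exists_mem_eq_sup' (s := Finset.range (min k M + 1))
      Finset.nonempty_range_add_one (fun j => g (k - j))
  exact ⟨j, by simpa [Nat.lt_succ_iff] using hj, hje⟩

/-- Lemma 1 from Grippo et al., part (v).
If `f` is bounded below and Lipschitz, `σ` is a forcing function and the
sequence satisfies `f(w^k) ≤ R^k ≤ max_{0≤j≤min(k,M)} f(w^{k-j})` and
`f(w^{k+1}) ≤ R^k - σ(‖w^{k+1} - w^k‖)`, then `‖w^{k+1} - w^k‖ → 0`. -/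
theorem stmt_13 {n : ℕ}
    (f : EuclideanSpace ℝ (Fin n) → ℝ)
    (hbdd : BddBelow (Set.range f))
    (L' : ℝ) (hL' : 0 < L')
    (hlip : ∀ u v : EuclideanSpace ℝ (Fin n), |f u - f v| ≤ L' * ‖u - v‖)
    (σ : ℝ → ℝ) (hσnonneg : ∀ t, 0 ≤ t → 0 ≤ σ t)
    (hσforcing : ∀ t : ℕ → ℝ, (∀ k, 0 ≤ t k) →
      Tendsto (fun k => σ (t k)) atTop (nhds 0) → Tendsto t atTop (nhds 0))
    (M : ℕ)
    (w : ℕ → EuclideanSpace ℝ (Fin n)) (R : ℕ → ℝ)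
    (hRlow : ∀ k, f (w k) ≤ R k)
    (hRhigh : ∀ k, R k ≤ refMax (fun k => f (w k)) M k)
    (hdecr : ∀ k, f (w (k + 1)) ≤ R k - σ ‖w (k + 1) - w k‖) :
    Tendsto (fun k => ‖w (k + 1) - w k‖) atTop (nhds 0) := by
  classical
  -- abbreviations
  let g : ℕ → ℝ := fun k => f (w k)
  let t : ℕ → ℝ := fun k => ‖w (k + 1) - w k‖
  let V : ℕ → ℝ := fun k => refMax g M k
  have ht0 : ∀ k, 0 ≤ t k := fun k => norm_nonneg _
  have hσt : ∀ k, 0 ≤ σ (t k) := fun k => hσnonneg _ (ht0 k)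
  have hgV : ∀ k, g k ≤ V k := fun k => le_refMax g M k
  have hRV : ∀ k, R k ≤ V k := hRhigh
  have hdecr' : ∀ k, g (k + 1) ≤ R k - σ (t k) := hdecr
  -- V is nonincreasing
  have hVsucc : ∀ k, V (k + 1) ≤ V k := by
    intro k
    refine Finset.sup'_le _ _ ?_
    intro j hj
    rw [Finset.mem_range, Nat.lt_succ_iff] at hj
    match j with
    | 0 =>
      have h1 : g (k + 1) ≤ R k := by have := hdecr' k; have := hσt k; linarith
      simpa using h1.trans (hRV k)
    | (j' + 1) =>
      have heq : g (k + 1 - (j' + 1)) = g (k - j') := by congr 1; omega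
      exact heq.le.trans (le_refMax_of g M k j' (by omega))
  have hVanti : Antitone V := antitone_nat_of_succ_le hVsucc
  -- V is bounded below
  obtain ⟨b, hb⟩ := hbdd
  have hbV : BddBelow (Set.range V) := by
    refine ⟨b, ?_⟩
    rintro x ⟨k, rfl⟩
    exact le_trans (hb ⟨w k, rfl⟩) (hgV k)
  set Vs : ℝ := ⨅ k, V k with hVs
  have hVlim : Tendsto V atTop (nhds Vs) := tendsto_atTop_ciInf hVanti hbV
  -- index attaining the max
  have hex : ∀ k, ∃ j, j ≤ min k M ∧ V k = g (k - j) := fun k => refMax_exists g M k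
  choose jf hjle hjeq using hex
  let ℓ : ℕ → ℕ := fun k => k - jf k
  have hℓle : ∀ k, ℓ k ≤ k := fun k => Nat.sub_le _ _
  have hℓge : ∀ k, k - M ≤ ℓ k := fun k => by
    have := hjle k; simp only [ℓ]; omega
  have hgℓ : ∀ k, g (ℓ k) = V k := fun k => (hjeq k).symm
  have hℓtop : Tendsto ℓ atTop atTop :=
    tendsto_atTop_mono hℓge (tendsto_sub_atTop_nat M)
  -- key induction: g (ℓ k - j) → Vs for every fixed j
  have Q : ∀ j : ℕ, Tendsto (fun k => g (ℓ k - j)) atTop (nhds Vs) := by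
    intro j
    induction j with
    | zero => simpa [hgℓ] using hVlim
    | succ j ih =>
      have hℓj : Tendsto (fun k => ℓ k - (j + 1)) atTop atTop := by
        refine tendsto_atTop_mono (fun k => ?_) (tendsto_sub_atTop_nat (M + (j + 1)))
        have := hℓge k; omega
      have hVcomp : Tendsto (fun k => V (ℓ k - (j + 1))) atTop (nhds Vs) :=
        hVlim.comp hℓj
      have hub : ∀ᶠ k in atTop,
          σ (t (ℓ k - (j + 1))) ≤ V (ℓ k - (j + 1)) - g (ℓ k - j) := by
        filter_upwards [hℓtop.eventually_ge_atTop (j + 1)] with k hk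
        have hi : ℓ k - (j + 1) + 1 = ℓ k - j := by omega
        have h1 := hdecr' (ℓ k - (j + 1))
        rw [hi] at h1
        have h2 := hRV (ℓ k - (j + 1))
        linarith
      have hσ0 : Tendsto (fun k => σ (t (ℓ k - (j + 1)))) atTop (nhds 0) := by
        have hd : Tendsto (fun k => V (ℓ k - (j + 1)) - g (ℓ k - j)) atTop (nhds 0) := by
          simpa using hVcomp.sub ih
        exact squeeze_zero' (Eventually.of_forall fun k => hσt _) hub hd
      have ht0' : Tendsto (fun k => t (ℓ k - (j + 1))) atTop (nhds 0) :=
        hσforcing _ (fun k => ht0 _) hσ0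
      have hlipb : ∀ᶠ k in atTop,
          ‖g (ℓ k - j) - g (ℓ k - (j + 1))‖ ≤ L' * t (ℓ k - (j + 1)) := by
        filter_upwards [hℓtop.eventually_ge_atTop (j + 1)] with k hk
        have hi : ℓ k - (j + 1) + 1 = ℓ k - j := by omega
        calc ‖g (ℓ k - j) - g (ℓ k - (j + 1))‖
            = |f (w (ℓ k - (j + 1) + 1)) - f (w (ℓ k - (j + 1)))| := by
              rw [hi]; rfl
          _ ≤ L' * ‖w (ℓ k - (j + 1) + 1) - w (ℓ k - (j + 1))‖ := hlip _ _
      have hdiff0 : Tendsto (fun k => g (ℓ k - j) - g (ℓ k - (j + 1))) atTop (nhds 0) :=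
        squeeze_zero_norm' hlipb (by simpa using ht0'.const_mul L')
      have := ih.sub hdiff0
      simpa using this
  -- conclude g k → Vs
  have hgVs : Tendsto g atTop (nhds Vs) := by
    rw [Metric.tendsto_atTop]
    intro ε hε
    have hQ : ∀ j : ℕ, ∃ N, ∀ k ≥ N, dist (g (ℓ k - j)) Vs < ε := fun j =>
      Metric.tendsto_atTop.1 (Q j) ε hε
    choose Nf hNf using hQ
    refine ⟨(Finset.range (M + 2)).sup Nf, fun k hk => ?_⟩
    have h1 : k + 1 ≤ ℓ (k + M + 1) := by have := hℓge (k + M + 1); omega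
    have h2 : ℓ (k + M + 1) ≤ k + M + 1 := hℓle _
    set j := ℓ (k + M + 1) - k with hj
    have hjm : j ∈ Finset.range (M + 2) := Finset.mem_range.2 (by omega)
    have hk' : k + M + 1 ≥ Nf j := le_trans (Finset.le_sup hjm) (by omega)
    have hfin := hNf j (k + M + 1) hk'
    have heq : ℓ (k + M + 1) - j = k := by omega
    rwa [heq] at hfin
  -- R k → Vs, g (k+1) → Vs
  have hRVs : Tendsto R atTop (nhds Vs) :=
    tendsto_of_tendsto_of_tendsto_of_le_of_le hgVs hVlim hRlow hRV
  have hg1 : Tendsto (fun k => g (k + 1)) atTop (nhds Vs) :=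
    hgVs.comp (tendsto_add_atTop_nat 1)
  -- σ (t k) → 0 and finish
  have hσfin : Tendsto (fun k => σ (t k)) atTop (nhds 0) := by
    have hub : ∀ k, σ (t k) ≤ R k - g (k + 1) := fun k => by
      have := hdecr' k; linarith
    have hd : Tendsto (fun k => R k - g (k + 1)) atTop (nhds 0) := by
      simpa using hRVs.sub hg1
    exact squeeze_zero (fun k => hσt k) hub hd
  exact hσforcing t ht0 hσfin
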